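/- Truth lemma for the canonical model, →ᵢ case: for a prime L-complete pair (Γ,Δ)_L in the canonical model and an L-formula B →ᵢ C with free variables among x₁,…,xₙ, one has B →ᵢ C ∈ Γ iff (Γ,Δ)_L ⊨ (B →ᵢ C)[x̲₁/x₁]⋯[x̲ₙ/xₙ], assuming the truth lemma holds for B and C. -/

import Mathlib

/-- Terms: variables (named by naturals) and constant symbols. -/
inductive Tm : Type
| var : ℕ → Tm
| const : ℕ → Tm
deriving DecidableEq

/-- Formulas of the combined language: atoms, ⊥, ∧, ∨, intuitionistic and
classical implication, intuitionistic and classical universal quantifier,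
and the existential quantifier. -/
inductive Fm : Type
| atom : ℕ → List Tm → Fm
| bot : Fm
| and : Fm → Fm → Fm
| or : Fm → Fm → Fm
| impI : Fm → Fm → Fm
| impC : Fm → Fm → Fm
| allI : ℕ → Fm → Fm
| allC : ℕ → Fm → Fm
| ex : ℕ → Fm → Fm
deriving DecidableEq

def Fm.top : Fm := .impI .bot .bot
def Fm.negC (A : Fm) : Fm := .impC A .bot
def Fm.negI (A : Fm) : Fm := .impI A .bot

def Tm.fv : Tm → Set ℕ
| .var x => {x}
| .const _ => ∅

/-- Free variables of a formula. -/
def Fm.fv : Fm → Set ℕ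
| .atom _ ts => {x | ∃ t ∈ ts, x ∈ t.fv}
| .bot => ∅
| .and A B => A.fv ∪ B.fv
| .or A B => A.fv ∪ B.fv
| .impI A B => A.fv ∪ B.fv
| .impC A B => A.fv ∪ B.fv
| .allI x A => A.fv \ {x}
| .allC x A => A.fv \ {x}
| .ex x A => A.fv \ {x}

/-- Bound variables of a formula. -/
def Fm.bv : Fm → Set ℕ
| .atom _ _ => ∅
| .bot => ∅
| .and A B => A.bv ∪ B.bv
| .or A B => A.bv ∪ B.bv
| .impI A B => A.bv ∪ B.bv
| .impC A B => A.bv ∪ B.bv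
| .allI x A => insert x A.bv
| .allC x A => insert x A.bv
| .ex x A => insert x A.bv

/-- All variables (free and bound) of a formula. -/
def Fm.vars : Fm → Set ℕ
| .atom _ ts => {x | ∃ t ∈ ts, x ∈ t.fv}
| .bot => ∅
| .and A B => A.vars ∪ B.vars
| .or A B => A.vars ∪ B.vars
| .impI A B => A.vars ∪ B.vars
| .impC A B => A.vars ∪ B.vars
| .allI x A => insert x A.vars
| .allC x A => insert x A.vars
| .ex x A => insert x A.vars

def Tm.subst (x : ℕ) (u : Tm) : Tm → Tm
| .var y => if y = x then u else .var y
| .const c => .const c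

/-- Substitution of term `u` for variable `x` (under the standing assumption
that bound and free variables are disjoint, this is clash-avoiding). -/
def Fm.subst : Fm → ℕ → Tm → Fm
| .atom P ts, x, u => .atom P (ts.map (Tm.subst x u))
| .bot, _, _ => .bot
| .and A B, x, u => .and (A.subst x u) (B.subst x u)
| .or A B, x, u => .or (A.subst x u) (B.subst x u)
| .impI A B, x, u => .impI (A.subst x u) (B.subst x u)
| .impC A B, x, u => .impC (A.subst x u) (B.subst x u)
| .allI y A, x, u => .allI y (if y = x then A else A.subst x u)
| .allC y A, x, u => .allC y (if y = x then A else A.subst x u)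
| .ex y A, x, u => .ex y (if y = x then A else A.subst x u)

/-- Persistent formulas: atoms, →ᵢ-formulas and ∀ᵢ-formulas. -/
def Fm.Persistent : Fm → Prop
| .atom _ _ => True
| .impI _ _ => True
| .allI _ _ => True
| _ => False

/-- Purely intuitionistic formulas (no →_c, no ∀_c). -/
def Fm.IsJ : Fm → Prop
| .atom _ _ => True
| .bot => True
| .and A B => A.IsJ ∧ B.IsJ
| .or A B => A.IsJ ∧ B.IsJ
| .impI A B => A.IsJ ∧ B.IsJ
| .impC _ _ => False
| .allI _ A => A.IsJ
| .allC _ _ => False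
| .ex _ A => A.IsJ

/-- Purely classical formulas (no →ᵢ, no ∀ᵢ). -/
def Fm.IsC : Fm → Prop
| .atom _ _ => True
| .bot => True
| .and A B => A.IsC ∧ B.IsC
| .or A B => A.IsC ∧ B.IsC
| .impI _ _ => False
| .impC A B => A.IsC ∧ B.IsC
| .allI _ _ => False
| .allC _ A => A.IsC
| .ex _ A => A.IsC

/-- A raw Kripke structure for the combined first-order language. -/
structure KModel (U : Type) where
  W : Type
  R : W → W → Prop
  D : W → Set U
  cI : ℕ → U
  V : ℕ → W → Set (List U)

/-- The conditions making a raw structure an intuitionistic Kripke model: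
`R` is a preorder, domains are nonempty, monotone, with nonempty
intersection, constants are rigid (interpreted in every domain), and the
predicate valuation is monotone (hereditary) along `R`. -/
structure KModel.IsKripke {U : Type} (M : KModel U) : Prop where
  wNonempty : Nonempty M.W
  refl : ∀ w, M.R w w
  trans : ∀ {w v u}, M.R w v → M.R v u → M.R w u
  dNonempty : ∀ w, (M.D w).Nonempty
  dMono : ∀ {w v}, M.R w v → M.D w ⊆ M.D v
  dInter : (⋂ w, M.D w).Nonempty
  cMem : ∀ c w, M.cI c ∈ M.D w
  vMono : ∀ P {w v}, M.R w v → M.V P w ⊆ M.V P v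

def Tm.val {U : Type} (M : KModel U) (g : ℕ → U) : Tm → U
| .var x => g x
| .const c => M.cI c

/-- Satisfaction of a formula at a world under an assignment. -/
def Fm.Sat {U : Type} (M : KModel U) : Fm → M.W → (ℕ → U) → Prop
| .atom P ts, w, g => ts.map (Tm.val M g) ∈ M.V P w
| .bot, _, _ => False
| .and A B, w, g => A.Sat M w g ∧ B.Sat M w g
| .or A B, w, g => A.Sat M w g ∨ B.Sat M w g
| .impI A B, w, g => ∀ v, M.R w v → A.Sat M v g → B.Sat M v g
| .impC A B, w, g => A.Sat M w g → B.Sat M w g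
| .allI x A, w, g => ∀ v, M.R w v → ∀ d ∈ M.D v, A.Sat M v (Function.update g x d)
| .allC x A, w, g => ∀ d ∈ M.D w, A.Sat M w (Function.update g x d)
| .ex x A, w, g => ∃ d ∈ M.D w, A.Sat M w (Function.update g x d)

/-- Multi-succedent semantic consequence: at every world of every Kripke
model, under any assignment into the domain, if all of `Γ` holds then some
member of `Δ` holds. -/
def Conseq (Γ Δ : List Fm) : Prop :=
  ∀ (U : Type) (M : KModel U), M.IsKripke → ∀ (w : M.W) (g : ℕ → U),
    (∀ x, g x ∈ M.D w) → (∀ A ∈ Γ, A.Sat M w g) → ∃ B ∈ Δ, B.Sat M w g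

/-- The sequent calculus G(FOC+J). -/
inductive Der : List Fm → List Fm → Prop
| id (A : Fm) : Der [A] [A]
| botL : Der [.bot] []
| perm {Γ Γ' Δ Δ'} : Γ.Perm Γ' → Δ.Perm Δ' → Der Γ Δ → Der Γ' Δ'
| wL {Γ Δ} (A) : Der Γ Δ → Der (A :: Γ) Δ
| wR {Γ Δ} (A) : Der Γ Δ → Der Γ (A :: Δ)
| cL {Γ Δ A} : Der (A :: A :: Γ) Δ → Der (A :: Γ) Δ
| cR {Γ Δ A} : Der Γ (A :: A :: Δ) → Der Γ (A :: Δ)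
| cut {Γ Δ P S A} : Der Γ (A :: Δ) → Der (A :: P) S → Der (Γ ++ P) (Δ ++ S)
| impIR {Θ A B} : (∀ C ∈ Θ, Fm.Persistent C) →
    Der (A :: Θ) [B] → Der Θ [.impI A B]
| impIL {Γ₁ Γ₂ Δ₁ Δ₂ A B} : Der Γ₁ (A :: Δ₁) → Der (B :: Γ₂) Δ₂ →
    Der (.impI A B :: (Γ₁ ++ Γ₂)) (Δ₁ ++ Δ₂)
| impCR {Γ Δ A B} : Der (A :: Γ) (B :: Δ) → Der Γ (.impC A B :: Δ)
| impCL {Γ₁ Γ₂ Δ₁ Δ₂ A B} : Der Γ₁ (A :: Δ₁) → Der (B :: Γ₂) Δ₂ →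
    Der (.impC A B :: (Γ₁ ++ Γ₂)) (Δ₁ ++ Δ₂)
| andR {Γ Δ A B} : Der Γ (A :: Δ) → Der Γ (B :: Δ) → Der Γ (.and A B :: Δ)
| andL1 {Γ Δ A B} : Der (A :: Γ) Δ → Der (.and A B :: Γ) Δ
| andL2 {Γ Δ A B} : Der (B :: Γ) Δ → Der (.and A B :: Γ) Δ
| orR1 {Γ Δ A B} : Der Γ (A :: Δ) → Der Γ (.or A B :: Δ)
| orR2 {Γ Δ A B} : Der Γ (B :: Δ) → Der Γ (.or A B :: Δ)
| orL {Γ Δ A B} : Der (A :: Γ) Δ → Der (B :: Γ) Δ → Der (.or A B :: Γ) Δ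
| allIR {Θ x z A} : (∀ C ∈ Θ, Fm.Persistent C) →
    (∀ C ∈ Θ, z ∉ Fm.fv C) → z ∉ Fm.fv (.allI x A) → z ∉ Fm.bv A →
    Der Θ [A.subst x (.var z)] → Der Θ [.allI x A]
| allIL {Γ Δ x A} (t : Tm) : (∀ y ∈ t.fv, y ∉ Fm.bv A) →
    Der (A.subst x t :: Γ) Δ → Der (.allI x A :: Γ) Δ
| allCR {Γ Δ x z A} : (∀ C ∈ Γ, z ∉ Fm.fv C) → (∀ C ∈ Δ, z ∉ Fm.fv C) →
    z ∉ Fm.fv (.allC x A) → z ∉ Fm.bv A →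
    Der Γ (A.subst x (.var z) :: Δ) → Der Γ (.allC x A :: Δ)
| allCL {Γ Δ x A} (t : Tm) : (∀ y ∈ t.fv, y ∉ Fm.bv A) →
    Der (A.subst x t :: Γ) Δ → Der (.allC x A :: Γ) Δ
| exR {Γ Δ x A} (t : Tm) : (∀ y ∈ t.fv, y ∉ Fm.bv A) →
    Der Γ (A.subst x t :: Δ) → Der Γ (.ex x A :: Δ)
| exL {Γ Δ x z A} : (∀ C ∈ Γ, z ∉ Fm.fv C) → (∀ C ∈ Δ, z ∉ Fm.fv C) →
    z ∉ Fm.fv (.ex x A) → z ∉ Fm.bv A →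
    Der (A.subst x (.var z) :: Γ) Δ → Der (.ex x A :: Γ) Δ

/-- A term of syntax `L` (a syntax is identified with its set of variables). -/
def TmInSyn (L : Set ℕ) (t : Tm) : Prop := t.fv ⊆ L

/-- An `L`-formula: all its variables belong to the syntax `L`. -/
def InSyn (L : Set ℕ) (A : Fm) : Prop := A.vars ⊆ L

/-- Derivability for (possibly infinite) sets of formulas: some finite
sub-sequent is derivable in G(FOC+J). -/
def SetDer (Γ Δ : Set Fm) : Prop :=
  ∃ G D : List Fm, (∀ A ∈ G, A ∈ Γ) ∧ (∀ A ∈ D, A ∈ Δ) ∧ Der G D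

/-- A prime pair with respect to a syntax `L`. -/
structure PrimePair (L : Set ℕ) (Γ Δ : Set Fm) : Prop where
  syntaxL : ∀ A ∈ Γ ∪ Δ, InSyn L A
  theory : ∀ A, InSyn L A → SetDer Γ {A} → A ∈ Γ
  underiv : ¬ SetDer Γ Δ
  prime : ∀ A B, Fm.or A B ∈ Γ → A ∈ Γ ∨ B ∈ Γ
  exProp : ∀ x A, Fm.ex x A ∈ Γ → ∃ t : Tm, TmInSyn L t ∧ A.subst x t ∈ Γ
  allCProp : ∀ x A, Fm.allC x A ∈ Δ → ∃ t : Tm, TmInSyn L t ∧ A.subst x t ∈ Δ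

/-- `L`-completeness of a pair: every `L`-formula is in `Γ` or in `Δ`. -/
def LComplete (L : Set ℕ) (Γ Δ : Set Fm) : Prop := Γ ∪ Δ = {A | InSyn L A}

/-- The base syntax 𝓛: its variables are the even naturals (so that 𝓛⁺,
with all variables, extends it by countably many fresh variables). -/
def Lbase : Set ℕ := {n | Even n}

/-- `L ⊏ L'`: the syntax `L'` extends `L` by (at least) countably many
fresh variables. -/
def Sqsub (L L' : Set ℕ) : Prop := L ⊆ L' ∧ (L' \ L).Infinite

/-- Worlds of the canonical model: prime `L`-complete pairs with
𝓛 ⊏ L ⊏ 𝓛⁺. -/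
structure CWorld : Type where
  L : Set ℕ
  Γ : Set Fm
  Δ : Set Fm
  hL1 : Sqsub Lbase L
  hL2 : Sqsub L Set.univ
  prime : PrimePair L Γ Δ
  complete : LComplete L Γ Δ

/-- The canonical model: accessibility is preservation of persistent
formulas (atoms, →ᵢ-formulas, ∀ᵢ-formulas); the domain at `(Γ,Δ)_L` is the
set of terms of `L`; a tuple of terms satisfies `P` iff the corresponding
atomic formula belongs to `Γ`. -/
def CModel : KModel Tm where
  W := CWorld
  R := fun w v =>
    (∀ P ts, Fm.atom P ts ∈ w.Γ → Fm.atom P ts ∈ v.Γ) ∧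
    (∀ A B, Fm.impI A B ∈ w.Γ → Fm.impI A B ∈ v.Γ) ∧
    (∀ x A, Fm.allI x A ∈ w.Γ → Fm.allI x A ∈ v.Γ)
  D := fun w => {t | TmInSyn w.L t}
  cI := Tm.const
  V := fun P w => {ts | Fm.atom P ts ∈ w.Γ}
instance : Encodable Tm :=
  Encodable.ofEquiv (ℕ ⊕ ℕ)
    ⟨fun t => match t with | .var n => .inl n | .const n => .inr n,
     fun s => match s with | .inl n => .var n | .inr n => .const n,
     by rintro (n|n) <;> rfl, by rintro (n|n) <;> rfl⟩

def Fm.enc : Fm → ℕ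
| .atom P ts => Nat.pair 0 (Nat.pair P (Encodable.encode ts))
| .bot => Nat.pair 1 0
| .and A B => Nat.pair 2 (Nat.pair A.enc B.enc)
| .or A B => Nat.pair 3 (Nat.pair A.enc B.enc)
| .impI A B => Nat.pair 4 (Nat.pair A.enc B.enc)
| .impC A B => Nat.pair 5 (Nat.pair A.enc B.enc)
| .allI x A => Nat.pair 6 (Nat.pair x A.enc)
| .allC x A => Nat.pair 7 (Nat.pair x A.enc)
| .ex x A => Nat.pair 8 (Nat.pair x A.enc)

theorem Fm.enc_inj : ∀ A B : Fm, A.enc = B.enc → A = B := by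
  intro A
  induction A <;> intro B h <;> cases B <;>
    simp_all [Fm.enc, Nat.pair_eq_pair, Encodable.encode_inj] <;> tauto

instance : Countable Fm := ⟨⟨Fm.enc, fun {a b} => Fm.enc_inj a b⟩⟩

instance : Nonempty Fm := ⟨Fm.bot⟩
section Lemmas
open Fm

theorem Tm.fv_finite (t : Tm) : t.fv.Finite := by
  cases t <;> simp [Tm.fv]

theorem Fm.vars_finite (A : Fm) : A.vars.Finite := by
  induction A with
  | atom P ts =>
      have : {x | ∃ t ∈ ts, x ∈ t.fv} = ⋃ t ∈ ts, t.fv := by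
        ext x; simp
      rw [Fm.vars, this]
      exact Set.Finite.biUnion ts.finite_toSet (fun t _ => t.fv_finite)
  | bot => simp [Fm.vars]
  | and A B ihA ihB => exact ihA.union ihB
  | or A B ihA ihB => exact ihA.union ihB
  | impI A B ihA ihB => exact ihA.union ihB
  | impC A B ihA ihB => exact ihA.union ihB
  | allI x A ih => exact ih.insert x
  | allC x A ih => exact ih.insert x
  | ex x A ih => exact ih.insert x

theorem Fm.fv_subset_vars (A : Fm) : A.fv ⊆ A.vars := by
  induction A with
  | atom P ts => exact subset_rfl
  | bot => exact subset_rfl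
  | and A B ihA ihB => exact Set.union_subset_union ihA ihB
  | or A B ihA ihB => exact Set.union_subset_union ihA ihB
  | impI A B ihA ihB => exact Set.union_subset_union ihA ihB
  | impC A B ihA ihB => exact Set.union_subset_union ihA ihB
  | allI x A ih => exact (Set.diff_subset).trans (ih.trans (Set.subset_insert _ _))
  | allC x A ih => exact (Set.diff_subset).trans (ih.trans (Set.subset_insert _ _))
  | ex x A ih => exact (Set.diff_subset).trans (ih.trans (Set.subset_insert _ _))

theorem Fm.bv_subset_vars (A : Fm) : A.bv ⊆ A.vars := by
  induction A with
  | atom P ts => simp [Fm.bv]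
  | bot => exact subset_rfl
  | and A B ihA ihB => exact Set.union_subset_union ihA ihB
  | or A B ihA ihB => exact Set.union_subset_union ihA ihB
  | impI A B ihA ihB => exact Set.union_subset_union ihA ihB
  | impC A B ihA ihB => exact Set.union_subset_union ihA ihB
  | allI x A ih => exact Set.insert_subset_insert ih
  | allC x A ih => exact Set.insert_subset_insert ih
  | ex x A ih => exact Set.insert_subset_insert ih

theorem Tm.fv_subst (x : ℕ) (u t : Tm) : (Tm.subst x u t).fv ⊆ t.fv ∪ u.fv := by
  cases t with
  | var y =>
      by_cases h : y = x
      · rw [show Tm.subst x u (.var y) = u from by simp [Tm.subst, h]]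
        exact Set.subset_union_right
      · rw [show Tm.subst x u (.var y) = .var y from by simp [Tm.subst, h]]
        exact Set.subset_union_left
  | const c =>
      rw [show Tm.subst x u (.const c) = .const c from rfl]
      exact Set.subset_union_left

theorem Fm.vars_subst (A : Fm) (x : ℕ) (u : Tm) :
    (A.subst x u).vars ⊆ A.vars ∪ u.fv := by
  induction A with
  | atom P ts =>
      intro y hy
      simp only [Fm.subst, Fm.vars, Set.mem_setOf_eq, List.mem_map] at hy
      obtain ⟨t', ⟨t, ht, rfl⟩, hyt⟩ := hy
      rcases Tm.fv_subst x u t hyt with h | h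
      · exact Or.inl ⟨t, ht, h⟩
      · exact Or.inr h
  | bot => simp [Fm.subst, Fm.vars]
  | and A B ihA ihB =>
      simp only [Fm.subst, Fm.vars]
      rw [Set.union_union_distrib_right]
      exact Set.union_subset_union ihA ihB
  | or A B ihA ihB =>
      simp only [Fm.subst, Fm.vars]
      rw [Set.union_union_distrib_right]
      exact Set.union_subset_union ihA ihB
  | impI A B ihA ihB =>
      simp only [Fm.subst, Fm.vars]
      rw [Set.union_union_distrib_right]
      exact Set.union_subset_union ihA ihB
  | impC A B ihA ihB =>
      simp only [Fm.subst, Fm.vars]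
      rw [Set.union_union_distrib_right]
      exact Set.union_subset_union ihA ihB
  | allI z A ih =>
      by_cases h : z = x
      · simp only [Fm.subst, if_pos h, Fm.vars, h]
        exact Set.subset_union_left
      · simp only [Fm.subst, if_neg h, Fm.vars]
        rw [Set.insert_union]
        exact Set.insert_subset_insert ih
  | allC z A ih =>
      by_cases h : z = x
      · simp only [Fm.subst, if_pos h, Fm.vars, h]
        exact Set.subset_union_left
      · simp only [Fm.subst, if_neg h, Fm.vars]
        rw [Set.insert_union]
        exact Set.insert_subset_insert ih
  | ex z A ih =>
      by_cases h : z = x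
      · simp only [Fm.subst, if_pos h, Fm.vars, h]
        exact Set.subset_union_left
      · simp only [Fm.subst, if_neg h, Fm.vars]
        rw [Set.insert_union]
        exact Set.insert_subset_insert ih

end Lemmas
section Sequent

theorem Der.wRs {G D : List Fm} (E : List Fm) (h : Der G D) : Der G (E ++ D) := by
  induction E with
  | nil => exact h
  | cons a E ih => exact Der.wR a ih

theorem Der.wLs {G D : List Fm} (E : List Fm) (h : Der G D) : Der (E ++ G) D := by
  induction E with
  | nil => exact h
  | cons a E ih => exact Der.wL a ih

theorem Der.contractR {G : List Fm} (A : Fm) :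
    ∀ (k : ℕ) (D : List Fm), Der G (A :: (List.replicate k A ++ D)) → Der G (A :: D) := by
  intro k
  induction k with
  | zero => intro D h; exact h
  | succ k ih => intro D h; exact ih D (Der.cR h)

theorem Der.contractL {D : List Fm} (A : Fm) :
    ∀ (k : ℕ) (G : List Fm), Der (A :: (List.replicate k A ++ G)) D → Der (A :: G) D := by
  intro k
  induction k with
  | zero => intro G h; exact h
  | succ k ih => intro G h; exact ih G (Der.cL h)

theorem mem_filter_ne {x A : Fm} {D : List Fm}
    (h : x ∈ D.filter (fun y => !decide (y = A))) : x ∈ D ∧ x ≠ A := by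
  simpa using List.mem_filter.mp h

theorem Der.pullR {G D : List Fm} (A : Fm) (h : Der G D) :
    Der G (A :: D.filter (fun y => !decide (y = A))) := by
  have hperm : (D.filter (fun y => decide (y = A)) ++
      D.filter (fun y => !decide (y = A))).Perm D :=
    List.filter_append_perm _ D
  have heq : D.filter (fun y => decide (y = A)) = List.replicate (D.count A) A :=
    List.filter_eq A
  have h2 : Der G (List.replicate (D.count A) A ++ D.filter (fun y => !decide (y = A))) := by
    refine Der.perm (List.Perm.refl G) ?_ h
    rw [heq] at hperm
    exact hperm.symm
  cases hk : D.count A with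
  | zero => rw [hk] at h2; exact Der.wR A h2
  | succ k =>
      rw [hk] at h2
      exact Der.contractR A k _ h2

theorem Der.pullL {G D : List Fm} (A : Fm) (h : Der G D) :
    Der (A :: G.filter (fun y => !decide (y = A))) D := by
  have hperm : (G.filter (fun y => decide (y = A)) ++
      G.filter (fun y => !decide (y = A))).Perm G :=
    List.filter_append_perm _ G
  have heq : G.filter (fun y => decide (y = A)) = List.replicate (G.count A) A :=
    List.filter_eq A
  have h2 : Der (List.replicate (G.count A) A ++ G.filter (fun y => !decide (y = A))) D := by
    refine Der.perm ?_ (List.Perm.refl D) h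
    rw [heq] at hperm
    exact hperm.symm
  cases hk : G.count A with
  | zero => rw [hk] at h2; exact Der.wL A h2
  | succ k =>
      rw [hk] at h2
      exact Der.contractL A k _ h2

theorem SetDer.mono {Γ Γ' Δ Δ' : Set Fm} (h : SetDer Γ Δ) (h1 : Γ ⊆ Γ') (h2 : Δ ⊆ Δ') :
    SetDer Γ' Δ' := by
  obtain ⟨G, D, hG, hD, d⟩ := h
  exact ⟨G, D, fun A hA => h1 (hG A hA), fun A hA => h2 (hD A hA), d⟩

theorem setder_of_mem {Γ Δ : Set Fm} {A : Fm} (h1 : A ∈ Γ) (h2 : A ∈ Δ) : SetDer Γ Δ :=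
  ⟨[A], [A], by simpa using h1, by simpa using h2, Der.id A⟩

theorem setder_cut {Γ Δ : Set Fm} {A : Fm}
    (h1 : SetDer Γ (insert A Δ)) (h2 : SetDer (insert A Γ) Δ) : SetDer Γ Δ := by
  obtain ⟨G1, D1, hG1, hD1, d1⟩ := h1
  obtain ⟨G2, D2, hG2, hD2, d2⟩ := h2
  have d1' := Der.pullR A d1
  have d2' := Der.pullL A d2
  refine ⟨G1 ++ G2.filter (fun y => !decide (y = A)),
      D1.filter (fun y => !decide (y = A)) ++ D2, ?_, ?_, Der.cut d1' d2'⟩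
  · intro X hX
    rcases List.mem_append.mp hX with h | h
    · exact hG1 X h
    · obtain ⟨hm, hne⟩ := mem_filter_ne h
      rcases hG2 X hm with h' | h'
      · exact absurd h' hne
      · exact h'
  · intro X hX
    rcases List.mem_append.mp hX with h | h
    · obtain ⟨hm, hne⟩ := mem_filter_ne h
      rcases hD1 X hm with h' | h'
      · exact absurd h' hne
      · exact h'
    · exact hD2 X h

end Sequent
section Extension

/-- State of the Lindenbaum-style extension construction. -/
structure EState where
  Ga : Set Fm
  De : Set Fm
  F : Set ℕ

open Classical in
noncomputable def freshVar (Z S : Set ℕ) : ℕ :=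
  if h : (Z \ S).Nonempty then h.choose else 0

theorem freshVar_spec {Z S : Set ℕ} (h : (Z \ S).Nonempty) :
    freshVar Z S ∈ Z \ S := by rw [freshVar, dif_pos h]; exact h.choose_spec

open Classical in
/-- One step of the extension construction, processing formula `A`. -/
noncomputable def estep (L' Z1 : Set ℕ) (s : EState) (A : Fm) : EState :=
  if InSyn L' A then
    if ¬ SetDer (insert A s.Ga) s.De then
      match A with
      | .ex x A0 =>
          ⟨insert (.ex x A0) (insert (A0.subst x
              (.var (freshVar Z1 (s.F ∪ (Fm.ex x A0).vars)))) s.Ga), s.De,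
            s.F ∪ (Fm.ex x A0).vars ∪ {freshVar Z1 (s.F ∪ (Fm.ex x A0).vars)}⟩
      | A => ⟨insert A s.Ga, s.De, s.F ∪ A.vars⟩
    else
      match A with
      | .allC x A0 =>
          ⟨s.Ga, insert (.allC x A0) (insert (A0.subst x
              (.var (freshVar Z1 (s.F ∪ (Fm.allC x A0).vars)))) s.De),
            s.F ∪ (Fm.allC x A0).vars ∪ {freshVar Z1 (s.F ∪ (Fm.allC x A0).vars)}⟩
      | A => ⟨s.Ga, insert A s.De, s.F ∪ A.vars⟩
  else s

theorem estep_eq_skip {L' Z1 : Set ℕ} {s : EState} {A : Fm} (h : ¬ InSyn L' A) :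
    estep L' Z1 s A = s := by simp [estep, h]

theorem estep_eq_G {L' Z1 : Set ℕ} {s : EState} {A : Fm} (hsyn : InSyn L' A)
    (hder : ¬ SetDer (insert A s.Ga) s.De) (hnex : ∀ x A0, A ≠ .ex x A0) :
    estep L' Z1 s A = ⟨insert A s.Ga, s.De, s.F ∪ A.vars⟩ := by
  cases A <;> simp [estep, hsyn, hder]
  exact absurd rfl (hnex _ _)

theorem estep_eq_Gex {L' Z1 : Set ℕ} {s : EState} {x : ℕ} {A0 : Fm}
    (hsyn : InSyn L' (Fm.ex x A0))
    (hder : ¬ SetDer (insert (Fm.ex x A0) s.Ga) s.De) :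
    estep L' Z1 s (.ex x A0) =
      ⟨insert (.ex x A0) (insert (A0.subst x
          (.var (freshVar Z1 (s.F ∪ (Fm.ex x A0).vars)))) s.Ga), s.De,
        s.F ∪ (Fm.ex x A0).vars ∪ {freshVar Z1 (s.F ∪ (Fm.ex x A0).vars)}⟩ := by
  simp [estep, hsyn, hder]

theorem estep_eq_D {L' Z1 : Set ℕ} {s : EState} {A : Fm} (hsyn : InSyn L' A)
    (hder : SetDer (insert A s.Ga) s.De) (hnall : ∀ x A0, A ≠ .allC x A0) :
    estep L' Z1 s A = ⟨s.Ga, insert A s.De, s.F ∪ A.vars⟩ := by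
  cases A <;> simp [estep, hsyn, hder]
  exact absurd rfl (hnall _ _)

theorem estep_eq_Dall {L' Z1 : Set ℕ} {s : EState} {x : ℕ} {A0 : Fm}
    (hsyn : InSyn L' (Fm.allC x A0))
    (hder : SetDer (insert (Fm.allC x A0) s.Ga) s.De) :
    estep L' Z1 s (.allC x A0) =
      ⟨s.Ga, insert (.allC x A0) (insert (A0.subst x
          (.var (freshVar Z1 (s.F ∪ (Fm.allC x A0).vars)))) s.De),
        s.F ∪ (Fm.allC x A0).vars ∪ {freshVar Z1 (s.F ∪ (Fm.allC x A0).vars)}⟩ := by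
  simp [estep, hsyn, hder]

theorem estep_Ga_mono {L' Z1 : Set ℕ} {s : EState} {A : Fm} :
    s.Ga ⊆ (estep L' Z1 s A).Ga := by
  by_cases hsyn : InSyn L' A
  · by_cases hder : SetDer (insert A s.Ga) s.De
    · by_cases hall : ∃ x A0, A = Fm.allC x A0
      · obtain ⟨x, A0, rfl⟩ := hall
        rw [estep_eq_Dall hsyn hder]
      · rw [estep_eq_D hsyn hder (fun x A0 h => hall ⟨x, A0, h⟩)]
    · by_cases hex : ∃ x A0, A = Fm.ex x A0
      · obtain ⟨x, A0, rfl⟩ := hex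
        rw [estep_eq_Gex hsyn hder]
        exact (Set.subset_insert _ _).trans (Set.subset_insert _ _)
      · rw [estep_eq_G hsyn hder (fun x A0 h => hex ⟨x, A0, h⟩)]
        exact Set.subset_insert _ _
  · rw [estep_eq_skip hsyn]

theorem estep_De_mono {L' Z1 : Set ℕ} {s : EState} {A : Fm} :
    s.De ⊆ (estep L' Z1 s A).De := by
  by_cases hsyn : InSyn L' A
  · by_cases hder : SetDer (insert A s.Ga) s.De
    · by_cases hall : ∃ x A0, A = Fm.allC x A0
      · obtain ⟨x, A0, rfl⟩ := hall
        rw [estep_eq_Dall hsyn hder]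
        exact (Set.subset_insert _ _).trans (Set.subset_insert _ _)
      · rw [estep_eq_D hsyn hder (fun x A0 h => hall ⟨x, A0, h⟩)]
        exact Set.subset_insert _ _
    · by_cases hex : ∃ x A0, A = Fm.ex x A0
      · obtain ⟨x, A0, rfl⟩ := hex
        rw [estep_eq_Gex hsyn hder]
      · rw [estep_eq_G hsyn hder (fun x A0 h => hex ⟨x, A0, h⟩)]
  · rw [estep_eq_skip hsyn]

end Extension
section Witness

theorem exL_set {Γ Δ : Set Fm} {x : ℕ} {A0 : Fm} {z : ℕ}
    (hnd : ¬ SetDer (insert (Fm.ex x A0) Γ) Δ)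
    (hzΓ : ∀ C ∈ Γ, z ∉ Fm.vars C) (hzΔ : ∀ C ∈ Δ, z ∉ Fm.vars C)
    (hzA : z ∉ (Fm.ex x A0).vars) :
    ¬ SetDer (insert (A0.subst x (.var z)) (insert (Fm.ex x A0) Γ)) Δ := by
  rintro ⟨G, D, hG, hD, d⟩
  set W : Fm := A0.subst x (.var z) with hW
  have d' := Der.pullL W d
  set G' := G.filter (fun y => !decide (y = W)) with hG'
  have hG'sub : ∀ X ∈ G', X ∈ insert (Fm.ex x A0) Γ := by
    intro X hX
    obtain ⟨hm, hne⟩ := mem_filter_ne hX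
    rcases hG X hm with h | h
    · exact absurd h hne
    · exact h
  have hzmem : ∀ C ∈ insert (Fm.ex x A0) Γ, z ∉ Fm.vars C := by
    intro C hC
    rcases hC with rfl | hC
    · exact hzA
    · exact hzΓ C hC
  have d'' : Der (Fm.ex x A0 :: G') D := by
    refine Der.exL ?_ ?_ ?_ ?_ d'
    · intro C hC
      exact fun hfv => hzmem C (hG'sub C hC) (C.fv_subset_vars hfv)
    · intro C hC
      exact fun hfv => hzΔ C (hD C hC) (C.fv_subset_vars hfv)
    · exact fun hfv => hzA ((Fm.ex x A0).fv_subset_vars hfv)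
    · intro hbv
      exact hzA (Set.mem_insert_iff.mpr (Or.inr (A0.bv_subset_vars hbv)))
  exact hnd ⟨Fm.ex x A0 :: G', D, by
    intro X hX
    rcases List.mem_cons.mp hX with rfl | hX
    · exact Set.mem_insert _ _
    · exact hG'sub X hX, hD, d''⟩

theorem allCR_set {Γ Δ : Set Fm} {x : ℕ} {A0 : Fm} {z : ℕ}
    (hnd : ¬ SetDer Γ (insert (Fm.allC x A0) Δ))
    (hzΓ : ∀ C ∈ Γ, z ∉ Fm.vars C) (hzΔ : ∀ C ∈ Δ, z ∉ Fm.vars C)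
    (hzA : z ∉ (Fm.allC x A0).vars) :
    ¬ SetDer Γ (insert (A0.subst x (.var z)) (insert (Fm.allC x A0) Δ)) := by
  rintro ⟨G, D, hG, hD, d⟩
  set W : Fm := A0.subst x (.var z) with hW
  have d' := Der.pullR W d
  set D' := D.filter (fun y => !decide (y = W)) with hD'
  have hD'sub : ∀ X ∈ D', X ∈ insert (Fm.allC x A0) Δ := by
    intro X hX
    obtain ⟨hm, hne⟩ := mem_filter_ne hX
    rcases hD X hm with h | h
    · exact absurd h hne
    · exact h
  have hzmem : ∀ C ∈ insert (Fm.allC x A0) Δ, z ∉ Fm.vars C := by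
    intro C hC
    rcases hC with rfl | hC
    · exact hzA
    · exact hzΔ C hC
  have d'' : Der G (Fm.allC x A0 :: D') := by
    refine Der.allCR ?_ ?_ ?_ ?_ d'
    · intro C hC
      exact fun hfv => hzΓ C (hG C hC) (C.fv_subset_vars hfv)
    · intro C hC
      exact fun hfv => hzmem C (hD'sub C hC) (C.fv_subset_vars hfv)
    · exact fun hfv => hzA ((Fm.allC x A0).fv_subset_vars hfv)
    · intro hbv
      exact hzA (Set.mem_insert_iff.mpr (Or.inr (A0.bv_subset_vars hbv)))
  exact hnd ⟨G, Fm.allC x A0 :: D', hG, by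
    intro X hX
    rcases List.mem_cons.mp hX with rfl | hX
    · exact Set.mem_insert _ _
    · exact hD'sub X hX, d''⟩

end Witness
section Inv

structure EInv (L L' Z1 : Set ℕ) (s : EState) : Prop where
  notDer : ¬ SetDer s.Ga s.De
  finF : s.F.Finite
  FL' : s.F ⊆ L'
  varsG : ∀ A ∈ s.Ga, Fm.vars A ⊆ L ∪ s.F
  varsD : ∀ A ∈ s.De, Fm.vars A ⊆ L ∪ s.F

theorem einv_step {L L' Z1 : Set ℕ} (hLL' : L ⊆ L') (hZ1 : Z1 ⊆ L')
    (hZ1L : ∀ z ∈ Z1, z ∉ L) (hZ1inf : Z1.Infinite)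
    {s : EState} {A : Fm} (h : EInv L L' Z1 s) : EInv L L' Z1 (estep L' Z1 s A) := by
  by_cases hsyn : InSyn L' A
  · have hAL' : A.vars ⊆ L' := hsyn
    -- fresh variable facts, for any pool S = s.F ∪ A.vars
    have hfresh : ∀ B : Fm, (Z1 \ (s.F ∪ B.vars)).Nonempty := fun B =>
      ((hZ1inf.diff (h.finF.union B.vars_finite)).nonempty)
    by_cases hder : SetDer (insert A s.Ga) s.De
    · have hnd : ¬ SetDer s.Ga (insert A s.De) := fun hc => h.notDer (setder_cut hc hder)
      by_cases hall : ∃ x A0, A = Fm.allC x A0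
      · obtain ⟨x, A0, rfl⟩ := hall
        rw [estep_eq_Dall hsyn hder]
        obtain ⟨hzZ, hzS⟩ := freshVar_spec (hfresh (Fm.allC x A0))
        set z := freshVar Z1 (s.F ∪ (Fm.allC x A0).vars) with hz
        have hzF : z ∉ s.F := fun hc => hzS (Or.inl hc)
        have hzA : z ∉ (Fm.allC x A0).vars := fun hc => hzS (Or.inr hc)
        have hzL : z ∉ L := hZ1L z hzZ
        refine ⟨?_, ?_, ?_, ?_, ?_⟩
        · have := allCR_set hnd
            (fun C hC hc => (h.varsG C hC hc).elim (fun q => hzL q) (fun q => hzF q))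
            (fun C hC hc => (h.varsD C hC hc).elim (fun q => hzL q) (fun q => hzF q))
            hzA
          rw [Set.insert_comm] at this
          exact this
        · exact (h.finF.union (Fm.allC x A0).vars_finite).union (Set.finite_singleton z)
        · exact Set.union_subset (Set.union_subset h.FL' hAL')
            (by simpa using hZ1 hzZ)
        · intro X hX
          exact (h.varsG X hX).trans (Set.union_subset_union_right L
            ((Set.subset_union_left).trans Set.subset_union_left))
        · intro X hX
          rcases hX with rfl | hX
          · intro y hy
            rcases hAL' hy with _
            by_cases hyL : y ∈ L
            · exact Or.inl hyL
            · exact Or.inr (Or.inl (Or.inr hy))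
          · rcases hX with rfl | hX
            · intro y hy
              rcases Fm.vars_subst A0 x (.var z) hy with hy' | hy'
              · have : y ∈ (Fm.allC x A0).vars := Set.mem_insert_iff.mpr (Or.inr hy')
                exact Or.inr (Or.inl (Or.inr this))
              · simp only [Tm.fv, Set.mem_singleton_iff] at hy'
                exact Or.inr (Or.inr (by simp [hy']))
            · exact (h.varsD X hX).trans (Set.union_subset_union_right L
                ((Set.subset_union_left).trans Set.subset_union_left))
      · rw [estep_eq_D hsyn hder (fun x A0 hh => hall ⟨x, A0, hh⟩)]
        refine ⟨hnd, h.finF.union A.vars_finite, Set.union_subset h.FL' hAL', ?_, ?_⟩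
        · intro X hX
          exact (h.varsG X hX).trans (Set.union_subset_union_right L Set.subset_union_left)
        · intro X hX
          rcases hX with rfl | hX
          · intro y hy
            by_cases hyL : y ∈ L
            · exact Or.inl hyL
            · exact Or.inr (Or.inr hy)
          · exact (h.varsD X hX).trans (Set.union_subset_union_right L Set.subset_union_left)
    · by_cases hex : ∃ x A0, A = Fm.ex x A0
      · obtain ⟨x, A0, rfl⟩ := hex
        rw [estep_eq_Gex hsyn hder]
        obtain ⟨hzZ, hzS⟩ := freshVar_spec (hfresh (Fm.ex x A0))
        set z := freshVar Z1 (s.F ∪ (Fm.ex x A0).vars) with hz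
        have hzF : z ∉ s.F := fun hc => hzS (Or.inl hc)
        have hzA : z ∉ (Fm.ex x A0).vars := fun hc => hzS (Or.inr hc)
        have hzL : z ∉ L := hZ1L z hzZ
        refine ⟨?_, ?_, ?_, ?_, ?_⟩
        · have := exL_set hder
            (fun C hC hc => (h.varsG C hC hc).elim (fun q => hzL q) (fun q => hzF q))
            (fun C hC hc => (h.varsD C hC hc).elim (fun q => hzL q) (fun q => hzF q))
            hzA
          rw [Set.insert_comm] at this
          exact this
        · exact (h.finF.union (Fm.ex x A0).vars_finite).union (Set.finite_singleton z)
        · exact Set.union_subset (Set.union_subset h.FL' hAL')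
            (by simpa using hZ1 hzZ)
        · intro X hX
          rcases hX with rfl | hX
          · intro y hy
            by_cases hyL : y ∈ L
            · exact Or.inl hyL
            · exact Or.inr (Or.inl (Or.inr hy))
          · rcases hX with rfl | hX
            · intro y hy
              rcases Fm.vars_subst A0 x (.var z) hy with hy' | hy'
              · have : y ∈ (Fm.ex x A0).vars := Set.mem_insert_iff.mpr (Or.inr hy')
                exact Or.inr (Or.inl (Or.inr this))
              · simp only [Tm.fv, Set.mem_singleton_iff] at hy'
                exact Or.inr (Or.inr (by simp [hy']))
            · exact (h.varsG X hX).trans (Set.union_subset_union_right L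
                ((Set.subset_union_left).trans Set.subset_union_left))
        · intro X hX
          exact (h.varsD X hX).trans (Set.union_subset_union_right L
            ((Set.subset_union_left).trans Set.subset_union_left))
      · rw [estep_eq_G hsyn hder (fun x A0 hh => hex ⟨x, A0, hh⟩)]
        refine ⟨hder, h.finF.union A.vars_finite, Set.union_subset h.FL' hAL', ?_, ?_⟩
        · intro X hX
          rcases hX with rfl | hX
          · intro y hy
            by_cases hyL : y ∈ L
            · exact Or.inl hyL
            · exact Or.inr (Or.inr hy)
          · exact (h.varsG X hX).trans (Set.union_subset_union_right L Set.subset_union_left)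
        · intro X hX
          exact (h.varsD X hX).trans (Set.union_subset_union_right L Set.subset_union_left)
  · rw [estep_eq_skip hsyn]
    exact h

end Inv
section Chain

noncomputable def echain (L' Z1 : Set ℕ) (e : ℕ → Fm) (s0 : EState) : ℕ → EState
| 0 => s0
| n+1 => estep L' Z1 (echain L' Z1 e s0 n) (e n)

theorem exists_prime_extension
    (L L' Z1 : Set ℕ) (hLL' : L ⊆ L') (hZ1 : Z1 ⊆ L') (hZ1L : ∀ z ∈ Z1, z ∉ L)
    (hZ1inf : Z1.Infinite)
    (Γ0 Δ0 : Set Fm)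
    (hv : ∀ A ∈ Γ0 ∪ Δ0, Fm.vars A ⊆ L)
    (hnd : ¬ SetDer Γ0 Δ0) :
    ∃ Γ Δ : Set Fm, Γ0 ⊆ Γ ∧ Δ0 ⊆ Δ ∧ PrimePair L' Γ Δ ∧ LComplete L' Γ Δ := by
  obtain ⟨e, he⟩ := exists_surjective_nat Fm
  set ch := echain L' Z1 e ⟨Γ0, Δ0, ∅⟩ with hch
  have hchS : ∀ n, ch (n+1) = estep L' Z1 (ch n) (e n) := fun n => rfl
  have hinv : ∀ n, EInv L L' Z1 (ch n) := by
    intro n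
    induction n with
    | zero =>
        refine ⟨hnd, Set.finite_empty, Set.empty_subset _, ?_, ?_⟩
        · exact fun A hA y hy => Or.inl (hv A (Or.inl hA) hy)
        · exact fun A hA y hy => Or.inl (hv A (Or.inr hA) hy)
    | succ n ih => exact einv_step hLL' hZ1 hZ1L hZ1inf ih
  set Γ := ⋃ n, (ch n).Ga with hΓ
  set Δ := ⋃ n, (ch n).De with hΔ
  have hmono : ∀ {m n : ℕ}, m ≤ n → (ch m).Ga ⊆ (ch n).Ga ∧ (ch m).De ⊆ (ch n).De := by
    intro m n h
    induction h with
    | refl => exact ⟨subset_rfl, subset_rfl⟩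
    | @step k h ih =>
        refine ⟨ih.1.trans ?_, ih.2.trans ?_⟩
        · rw [hchS k]; exact estep_Ga_mono
        · rw [hchS k]; exact estep_De_mono
  have capG : ∀ (G : List Fm), (∀ A ∈ G, A ∈ Γ) → ∃ N, ∀ A ∈ G, A ∈ (ch N).Ga := by
    intro G
    induction G with
    | nil => exact fun _ => ⟨0, by simp⟩
    | cons a G ih =>
        intro hG
        obtain ⟨N, hN⟩ := ih (fun A hA => hG A (List.mem_cons_of_mem a hA))
        obtain ⟨m, hmem⟩ := Set.mem_iUnion.mp (hG a (List.mem_cons_self))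
        refine ⟨max m N, ?_⟩
        intro A hA
        rcases List.mem_cons.mp hA with rfl | hA
        · exact (hmono (le_max_left m N)).1 hmem
        · exact (hmono (le_max_right m N)).1 (hN A hA)
  have capD : ∀ (D : List Fm), (∀ A ∈ D, A ∈ Δ) → ∃ N, ∀ A ∈ D, A ∈ (ch N).De := by
    intro D
    induction D with
    | nil => exact fun _ => ⟨0, by simp⟩
    | cons a D ih =>
        intro hD
        obtain ⟨N, hN⟩ := ih (fun A hA => hD A (List.mem_cons_of_mem a hA))
        obtain ⟨m, hmem⟩ := Set.mem_iUnion.mp (hD a (List.mem_cons_self))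
        refine ⟨max m N, ?_⟩
        intro A hA
        rcases List.mem_cons.mp hA with rfl | hA
        · exact (hmono (le_max_left m N)).2 hmem
        · exact (hmono (le_max_right m N)).2 (hN A hA)
  have hndinf : ¬ SetDer Γ Δ := by
    rintro ⟨G, D, hG, hD, d⟩
    obtain ⟨N1, hN1⟩ := capG G hG
    obtain ⟨N2, hN2⟩ := capD D hD
    refine (hinv (max N1 N2)).notDer ⟨G, D, ?_, ?_, d⟩
    · exact fun A hA => (hmono (le_max_left N1 N2)).1 (hN1 A hA)
    · exact fun A hA => (hmono (le_max_right N1 N2)).2 (hN2 A hA)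
  have hsynΓ : ∀ A ∈ Γ, InSyn L' A := by
    intro A hA
    obtain ⟨n, hmem⟩ := Set.mem_iUnion.mp hA
    exact ((hinv n).varsG A hmem).trans (Set.union_subset hLL' (hinv n).FL')
  have hsynΔ : ∀ A ∈ Δ, InSyn L' A := by
    intro A hA
    obtain ⟨n, hmem⟩ := Set.mem_iUnion.mp hA
    exact ((hinv n).varsD A hmem).trans (Set.union_subset hLL' (hinv n).FL')
  have memΓ : ∀ (n : ℕ) (A : Fm), A ∈ (ch n).Ga → A ∈ Γ :=
    fun n A hA => Set.mem_iUnion.mpr ⟨n, hA⟩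
  have memΔ : ∀ (n : ℕ) (A : Fm), A ∈ (ch n).De → A ∈ Δ :=
    fun n A hA => Set.mem_iUnion.mpr ⟨n, hA⟩
  have hplace : ∀ A, InSyn L' A → A ∈ Γ ∨ A ∈ Δ := by
    intro A hA
    obtain ⟨n, rfl⟩ := he A
    by_cases hder : SetDer (insert (e n) (ch n).Ga) (ch n).De
    · refine Or.inr (memΔ (n+1) _ ?_)
      rw [hchS n]
      by_cases hall : ∃ x A0, e n = Fm.allC x A0
      · obtain ⟨x, A0, hEq⟩ := hall
        rw [hEq] at hA hder ⊢
        rw [estep_eq_Dall hA hder]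
        exact Set.mem_insert _ _
      · rw [estep_eq_D hA hder (fun x A0 hh => hall ⟨x, A0, hh⟩)]
        exact Set.mem_insert _ _
    · refine Or.inl (memΓ (n+1) _ ?_)
      rw [hchS n]
      by_cases hex : ∃ x A0, e n = Fm.ex x A0
      · obtain ⟨x, A0, hEq⟩ := hex
        rw [hEq] at hA hder ⊢
        rw [estep_eq_Gex hA hder]
        exact Set.mem_insert _ _
      · rw [estep_eq_G hA hder (fun x A0 hh => hex ⟨x, A0, hh⟩)]
        exact Set.mem_insert _ _
  refine ⟨Γ, Δ, fun A hA => memΓ 0 A hA, fun A hA => memΔ 0 A hA, ?_, ?_⟩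
  · refine ⟨?_, ?_, hndinf, ?_, ?_, ?_⟩
    · rintro A (h | h)
      · exact hsynΓ A h
      · exact hsynΔ A h
    · -- theory
      intro A hA hSD
      by_contra hn
      rcases hplace A hA with h | h
      · exact hn h
      · refine hndinf (hSD.mono subset_rfl ?_)
        intro X hX
        rw [Set.mem_singleton_iff] at hX
        rw [hX]
        exact h
    · -- prime
      intro A B hor
      by_contra hn
      push_neg at hn
      have hsynor : InSyn L' (Fm.or A B) := hsynΓ _ hor
      have hsA : InSyn L' A := fun y hy => hsynor (Or.inl hy)
      have hsB : InSyn L' B := fun y hy => hsynor (Or.inr hy)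
      have hAΔ : A ∈ Δ := by
        rcases hplace A hsA with h | h
        · exact absurd h hn.1
        · exact h
      have hBΔ : B ∈ Δ := by
        rcases hplace B hsB with h | h
        · exact absurd h hn.2
        · exact h
      have d1 : Der [A] [A, B] := by
        have := Der.wR B (Der.id A)
        exact Der.perm (List.Perm.refl _) (List.Perm.swap A B []) this
      have d2 : Der [B] [A, B] := Der.wR A (Der.id B)
      have d3 : Der [Fm.or A B] [A, B] := Der.orL d1 d2
      refine hndinf ⟨[Fm.or A B], [A, B], ?_, ?_, d3⟩
      · intro X hX
        rcases List.mem_cons.mp hX with rfl | hX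
        · exact hor
        · simp at hX
      · intro X hX
        rcases List.mem_cons.mp hX with rfl | hX
        · exact hAΔ
        · rcases List.mem_cons.mp hX with rfl | hX
          · exact hBΔ
          · simp at hX
    · -- exProp
      intro x A0 hmem
      obtain ⟨n, hEq⟩ := he (Fm.ex x A0)
      have hsynA : InSyn L' (Fm.ex x A0) := hsynΓ _ hmem
      have hder : ¬ SetDer (insert (Fm.ex x A0) (ch n).Ga) (ch n).De := by
        intro hc
        refine hndinf (hc.mono ?_ (fun X hX => memΔ n X hX))
        intro X hX
        rcases hX with rfl | hX
        · exact hmem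
        · exact memΓ n X hX
      have hnf : (Z1 \ ((ch n).F ∪ (Fm.ex x A0).vars)).Nonempty :=
        (hZ1inf.diff ((hinv n).finF.union (Fm.vars_finite _))).nonempty
      obtain ⟨hzZ, _⟩ := freshVar_spec hnf
      refine ⟨.var (freshVar Z1 ((ch n).F ∪ (Fm.ex x A0).vars)), ?_, ?_⟩
      · intro y hy
        rw [show Tm.fv (.var (freshVar Z1 ((ch n).F ∪ (Fm.ex x A0).vars))) =
            {freshVar Z1 ((ch n).F ∪ (Fm.ex x A0).vars)} from rfl] at hy
        rw [Set.mem_singleton_iff] at hy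
        rw [hy]
        exact hZ1 hzZ
      · refine memΓ (n+1) _ ?_
        rw [hchS n, hEq, estep_eq_Gex hsynA hder]
        exact Set.mem_insert_iff.mpr (Or.inr (Set.mem_insert _ _))
    · -- allCProp
      intro x A0 hmem
      obtain ⟨n, hEq⟩ := he (Fm.allC x A0)
      have hsynA : InSyn L' (Fm.allC x A0) := hsynΔ _ hmem
      have hder : SetDer (insert (Fm.allC x A0) (ch n).Ga) (ch n).De := by
        by_contra hder
        have : Fm.allC x A0 ∈ Γ := by
          refine memΓ (n+1) _ ?_
          rw [hchS n, hEq]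
          rw [estep_eq_G hsynA hder (fun y B hh => by cases hh)]
          exact Set.mem_insert _ _
        exact hndinf (setder_of_mem this hmem)
      have hnf : (Z1 \ ((ch n).F ∪ (Fm.allC x A0).vars)).Nonempty :=
        (hZ1inf.diff ((hinv n).finF.union (Fm.vars_finite _))).nonempty
      obtain ⟨hzZ, _⟩ := freshVar_spec hnf
      refine ⟨.var (freshVar Z1 ((ch n).F ∪ (Fm.allC x A0).vars)), ?_, ?_⟩
      · intro y hy
        rw [show Tm.fv (.var (freshVar Z1 ((ch n).F ∪ (Fm.allC x A0).vars))) =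
            {freshVar Z1 ((ch n).F ∪ (Fm.allC x A0).vars)} from rfl] at hy
        rw [Set.mem_singleton_iff] at hy
        rw [hy]
        exact hZ1 hzZ
      · refine memΔ (n+1) _ ?_
        rw [hchS n, hEq, estep_eq_Dall hsynA hder]
        exact Set.mem_insert_iff.mpr (Or.inr (Set.mem_insert _ _))
  · -- LComplete
    apply Set.Subset.antisymm
    · rintro A (h | h)
      · exact hsynΓ A h
      · exact hsynΔ A h
    · intro A hA
      exact hplace A hA

end Chain

/-- the →ᵢ case of the Truth Lemma for the canonical model:
for a prime `L`-complete pair `w = (Γ,Δ)_L` and an `L`-formula `B →ᵢ C`,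
assuming the truth lemma for `B` and for `C`, one has `B →ᵢ C ∈ Γ` iff
`B →ᵢ C` is satisfied at `w` (each free variable `x` being interpreted by
its own name, the term `x`). -/
theorem truth_lemma_impI (w : CWorld) (B C : Fm)
    (hsyn : InSyn w.L (.impI B C))
    (ihB : ∀ v : CWorld, InSyn v.L B → (B ∈ v.Γ ↔ B.Sat CModel v Tm.var))
    (ihC : ∀ v : CWorld, InSyn v.L C → (C ∈ v.Γ ↔ C.Sat CModel v Tm.var)) :
    Fm.impI B C ∈ w.Γ ↔ (Fm.impI B C).Sat CModel w Tm.var := by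
  constructor
  · intro hmem
    intro v hRv hBv
    have hiv : Fm.impI B C ∈ v.Γ := hRv.2.1 B C hmem
    have hsynv : InSyn v.L (Fm.impI B C) := v.prime.syntaxL _ (Set.mem_union_left _ hiv)
    have hBv' : B ∈ v.Γ := (ihB v (fun y hy => hsynv (Set.mem_union_left _ hy))).mpr hBv
    have d : Der [Fm.impI B C, B] [C] := by
      have := Der.impIL (Γ₁ := [B]) (Γ₂ := []) (Δ₁ := []) (Δ₂ := [C])
        (Der.id B) (Der.id C)
      simpa using this
    have hsd : SetDer v.Γ {C} := by
      refine ⟨[Fm.impI B C, B], [C], ?_, by simp, d⟩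
      intro X hX
      rcases List.mem_cons.mp hX with rfl | hX
      · exact hiv
      · rcases List.mem_cons.mp hX with rfl | hX
        · exact hBv'
        · simp at hX
    have hCv : C ∈ v.Γ := v.prime.theory C (fun y hy => hsynv (Set.mem_union_right _ hy)) hsd
    exact (ihC v (fun y hy => hsynv (Set.mem_union_right _ hy))).mp hCv
  · intro hsat
    by_contra hmem
    set Θ : Set Fm := {A | A ∈ w.Γ ∧ Fm.Persistent A} with hΘ
    -- the premises of an →ᵢ-right inference are underivable
    have hnd : ¬ SetDer (insert B Θ) {C} := by
      rintro ⟨G, D, hG, hD, d⟩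
      have d1 := Der.pullR C d
      have hDnil : D.filter (fun y => !decide (y = C)) = [] := by
        rw [List.eq_nil_iff_forall_not_mem]
        intro a ha
        obtain ⟨hm, hne⟩ := mem_filter_ne ha
        exact hne (hD a hm)
      rw [hDnil] at d1
      have d2 := Der.pullL B d1
      have hG' : ∀ X ∈ G.filter (fun y => !decide (y = B)), X ∈ w.Γ ∧ Fm.Persistent X := by
        intro X hX
        obtain ⟨hm, hne⟩ := mem_filter_ne hX
        rcases hG X hm with h | h
        · exact absurd h hne
        · exact h
      have d3 := Der.impIR (fun X hX => (hG' X hX).2) d2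
      have hsd : SetDer w.Γ {Fm.impI B C} :=
        ⟨_, [Fm.impI B C], fun X hX => (hG' X hX).1, by simp, d3⟩
      exact hmem (w.prime.theory _ hsyn hsd)
    -- fresh variables
    have hinf := w.hL2.2
    set f := hinf.natEmbedding with hf
    have hginj : Function.Injective (fun n => (f n : ℕ)) :=
      fun a b h => f.injective (Subtype.coe_injective h)
    have hgL : ∀ n, ((f n : ℕ)) ∉ w.L := fun n => (f n).2.2
    set Z1 : Set ℕ := Set.range (fun n => (f (2 * n) : ℕ)) with hZ1def
    set Z2 : Set ℕ := Set.range (fun n => (f (2 * n + 1) : ℕ)) with hZ2def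
    have hZ1inj : Function.Injective (fun n : ℕ => (f (2 * n) : ℕ)) := by
      intro a b h
      have := hginj h
      omega
    have hZ2inj : Function.Injective (fun n : ℕ => (f (2 * n + 1) : ℕ)) := by
      intro a b h
      have := hginj h
      omega
    have hZ1inf : Z1.Infinite := Set.infinite_range_of_injective hZ1inj
    have hZ2inf : Z2.Infinite := Set.infinite_range_of_injective hZ2inj
    have hZ1L : ∀ z ∈ Z1, z ∉ w.L := by
      rintro z ⟨n, rfl⟩
      exact hgL (2 * n)
    have hZ2L : ∀ z ∈ Z2, z ∉ w.L := by
      rintro z ⟨n, rfl⟩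
      exact hgL (2 * n + 1)
    have hZ12 : ∀ z ∈ Z2, z ∉ Z1 := by
      rintro z ⟨n, rfl⟩ ⟨m, hm⟩
      have := hginj hm
      omega
    set L' : Set ℕ := w.L ∪ Z1 with hL'def
    have hLL' : w.L ⊆ L' := Set.subset_union_left
    have hZ1L' : Z1 ⊆ L' := Set.subset_union_right
    -- apply the extension lemma
    have hv : ∀ A ∈ insert B Θ ∪ {C}, Fm.vars A ⊆ w.L := by
      rintro A (hA | hA)
      · rcases hA with rfl | hA
        · exact fun y hy => hsyn (Set.mem_union_left _ hy)
        · exact w.prime.syntaxL A (Set.mem_union_left _ hA.1)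
      · rw [Set.mem_singleton_iff] at hA
        rw [hA]
        exact fun y hy => hsyn (Set.mem_union_right _ hy)
    obtain ⟨Γ', Δ', hΓ0, hΔ0, hprime, hcomp⟩ :=
      exists_prime_extension w.L L' Z1 hLL' hZ1L' hZ1L hZ1inf (insert B Θ) {C} hv hnd
    have hL1v : Sqsub Lbase L' := by
      refine ⟨w.hL1.1.trans hLL', w.hL1.2.mono ?_⟩
      exact Set.diff_subset_diff_left hLL'
    have hL2v : Sqsub L' Set.univ := by
      refine ⟨Set.subset_univ _, hZ2inf.mono ?_⟩
      intro z hz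
      refine ⟨trivial, ?_⟩
      rintro (h | h)
      · exact hZ2L z hz h
      · exact hZ12 z hz h
    set v : CWorld := ⟨L', Γ', Δ', hL1v, hL2v, hprime, hcomp⟩ with hvdef
    have hRv : CModel.R w v := by
      refine ⟨?_, ?_, ?_⟩
      · intro P ts h
        exact hΓ0 (Set.mem_insert_iff.mpr (Or.inr ⟨h, trivial⟩))
      · intro A B h
        exact hΓ0 (Set.mem_insert_iff.mpr (Or.inr ⟨h, trivial⟩))
      · intro x A h
        exact hΓ0 (Set.mem_insert_iff.mpr (Or.inr ⟨h, trivial⟩))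
    have hBmem : B ∈ Γ' := hΓ0 (Set.mem_insert _ _)
    have hsynB : InSyn v.L B := fun y hy => Or.inl (hsyn (Set.mem_union_left _ hy))
    have hsynC : InSyn v.L C := fun y hy => Or.inl (hsyn (Set.mem_union_right _ hy))
    have hBsat : B.Sat CModel v Tm.var := (ihB v hsynB).mp hBmem
    have hCsat : C.Sat CModel v Tm.var := hsat v hRv hBsat
    have hCmem : C ∈ Γ' := (ihC v hsynC).mpr hCsat
    have hCΔ : C ∈ Δ' := hΔ0 rfl
    exact hprime.underiv (setder_of_mem hCmem hCΔ)
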